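/- For X ∈ G₂ and h : G₁ → A define β̃_X[h](z) := β_X( h(z) ) * ṽ(X,z). Then X ↦ β̃_X is a group homomorphism: for all X, Y ∈ G₂ and all h : G₁ → A, β̃_X[ β̃_Y[h] ] = β̃_{XY}[h], i.e. pointwise β_X( β_Y(h(z)) * ṽ(Y,z) ) * ṽ(X,z) = β_{XY}( h(z) ) * ṽ(XY, z) for all z ∈ G₁. -/

import Mathlib

/-- **setting of Theorem 8.1.**  With `(β, v, φ, ṽ)` as in Theorem 8.1,
define `β̃_X[h](z) := β_X(h(z)) * ṽ(X,z)` for `X ∈ G₂` and `h : G₁ → A`.  Then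
`X ↦ β̃_X` is a group homomorphism: `β̃_X[β̃_Y[h]] = β̃_{XY}[h]`, i.e. pointwise
`β_X(β_Y(h(z)) * ṽ(Y,z)) * ṽ(X,z) = β_{XY}(h(z)) * ṽ(XY,z)`. -/
theorem beta_tilde_group_homomorphism
    {A : Type*} [NormedRing A] [StarRing A] [CStarRing A] [NormedAlgebra ℂ A]
    [CompleteSpace A] [StarModule ℂ A]
    {G₁ G₂ : Type*} [CommGroup G₁] [CommGroup G₂]
    (β : G₁ × G₂ → (A ≃⋆ₐ[ℂ] A)) (v : G₁ × G₂ → G₁ × G₂ → unitary A)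
    (htw : ∀ ξ η (a : A), β ξ (β η a) = (v ξ η : A) * β (ξ * η) a * star ((v ξ η : A)))
    (φ : G₁ × G₂ → G₁ × G₂ → G₁ × G₂ → ℂ)
    (hφabs : ∀ ξ η ζ, ‖φ ξ η ζ‖ = 1)
    (hmul₁ : ∀ ξ ξ' η ζ, φ (ξ * ξ') η ζ = φ ξ η ζ * φ ξ' η ζ)
    (hmul₂ : ∀ ξ η η' ζ, φ ξ (η * η') ζ = φ ξ η ζ * φ ξ η' ζ)
    (hmul₃ : ∀ ξ η ζ ζ', φ ξ η (ζ * ζ') = φ ξ η ζ * φ ξ η ζ')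
    (hswap₁₂ : ∀ ξ η ζ, φ η ξ ζ = (φ ξ η ζ)⁻¹)
    (hswap₂₃ : ∀ ξ η ζ, φ ξ ζ η = (φ ξ η ζ)⁻¹)
    (hcoc : ∀ ξ η ζ, (v ξ η : A) * (v (ξ * η) ζ : A)
      = φ ξ η ζ • (β ξ ((v η ζ : A)) * (v ξ (η * ζ) : A)))
    (hv₁ : ∀ x y : G₁, v (x, 1) (y, 1) = 1)
    (hv₂ : ∀ X Y : G₂, v ((1 : G₁), X) (1, Y) = 1)
    (hφG₁ : ∀ x y z : G₁, φ (x, 1) (y, 1) (z, 1) = 1)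
    (hφG₂ : ∀ (ξ : G₁ × G₂) (X Y : G₂),
      φ ξ ((1 : G₁), X) (1, Y) = 1 ∧ φ ((1 : G₁), X) ξ (1, Y) = 1 ∧
        φ ((1 : G₁), X) ((1 : G₁), Y) ξ = 1)
    (vt : G₁ × G₂ → G₁ × G₂ → A)
    (hvt : ∀ ξ η, vt ξ η = (v ξ η : A) * star ((v η ξ : A))) :
    ∀ (X Y : G₂) (h : G₁ → A) (z : G₁),
      β ((1 : G₁), X) (β ((1 : G₁), Y) (h z) * vt ((1 : G₁), Y) (z, 1))
          * vt ((1 : G₁), X) (z, 1)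
        = β ((1 : G₁), X * Y) (h z) * vt ((1 : G₁), X * Y) (z, 1) := by
  intro X Y h z
  set a := h z with ha
  -- coerced unitaries
  set u1 : A := (v ((1:G₁), X) (z, (1:G₂)) : A) with hu1
  set u2 : A := (v (z, (1:G₂)) ((1:G₁), X) : A) with hu2
  set u3 : A := (v ((1:G₁), Y) (z, (1:G₂)) : A) with hu3
  set u4 : A := (v (z, (1:G₂)) ((1:G₁), Y) : A) with hu4
  set u5 : A := (v ((1:G₁), X) (z, Y) : A) with hu5
  set u6 : A := (v (z, X) ((1:G₁), Y) : A) with hu6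
  set u7 : A := (v ((1:G₁), X * Y) (z, (1:G₂)) : A) with hu7
  set u8 : A := (v (z, (1:G₂)) ((1:G₁), X * Y) : A) with hu8
  -- β on the G₂ factor composes strictly
  have hβ1 : ∀ b : A, β ((1:G₁), X) (β ((1:G₁), Y) b) = β ((1:G₁), X * Y) b := by
    intro b
    rw [htw, hv₂]
    simp [Prod.mk_mul_mk]
  -- cocycle instances
  have h2 := hcoc ((1:G₁), X) ((1:G₁), Y) (z, (1:G₂))
  rw [hv₂, (hφG₂ (z, (1:G₂)) X Y).2.2, one_smul] at h2
  simp only [Prod.mk_mul_mk, one_mul, mul_one, OneMemClass.coe_one] at h2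
  rw [← hu3, ← hu5, ← hu7] at h2
  -- h2 : u7 = β (1,X) u3 * u5
  have h3 := hcoc ((1:G₁), X) (z, (1:G₂)) ((1:G₁), Y)
  rw [(hφG₂ (z, (1:G₂)) X Y).2.1, one_smul] at h3
  simp only [Prod.mk_mul_mk, one_mul, mul_one] at h3
  rw [← hu1, ← hu4, ← hu5, ← hu6] at h3
  -- h3 : u1 * u6 = β (1,X) u4 * u5
  have h4 := hcoc (z, (1:G₂)) ((1:G₁), X) ((1:G₁), Y)
  rw [(hφG₂ (z, (1:G₂)) X Y).1, one_smul, hv₂] at h4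
  simp only [Prod.mk_mul_mk, one_mul, mul_one, OneMemClass.coe_one, map_one] at h4
  rw [← hu2, ← hu6, ← hu8] at h4
  -- unitarity facts
  have c15 : u5 * star u5 = 1 := Unitary.coe_mul_star_self _
  have c11 : star u1 * u1 = 1 := Unitary.coe_star_mul_self _
  -- express β (1,X) u4
  have h3' : β ((1:G₁), X) u4 = u1 * u6 * star u5 := by
    rw [h3, mul_assoc, c15, mul_one]
  have h3'' : star (β ((1:G₁), X) u4) = u5 * (star u6 * star u1) := by
    rw [h3']; simp [star_mul, mul_assoc]
  -- cancellation helper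
  have c1 : star u1 * (u1 * star u2) = star u2 := by
    rw [← mul_assoc, c11, one_mul]
  -- main computation
  rw [hvt, hvt, hvt, ← hu1, ← hu2, ← hu3, ← hu4, ← hu7, ← hu8,
    map_mul, map_mul, map_star, h3'', hβ1, h2, ← h4]
  simp only [star_mul, mul_assoc, c1]
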